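/- Assuming the continuum hypothesis, there exist an almost disjoint family 𝒜 on ω and an infinite set W ⊆ ω such that: (i) 𝒜 is strongly ℵ₀-separated; and (ii) letting 𝒞 = {A ∈ 𝒜 : A ∩ W is infinite}, there is no set D ⊆ ω with A ⊆* D for every A ∈ 𝒜 \ 𝒞 and C ∩ D finite for every C ∈ 𝒞. -/

import Mathlib

open Set

/-- `A ⊆* D`: `A \ D` is finite. -/
def AlmostSubset (A D : Set ℕ) : Prop := (A \ D).Finite

/-- An almost disjoint family: a family of infinite subsets of `ℕ` any two distinct
members of which have finite intersection. -/
def AlmostDisjointFam (𝒜 : Set (Set ℕ)) : Prop :=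
  (∀ A ∈ 𝒜, A.Infinite) ∧ ∀ A ∈ 𝒜, ∀ B ∈ 𝒜, A ≠ B → (A ∩ B).Finite

/-- A maximal almost disjoint (MAD) family. -/
def MADFam (𝒜 : Set (Set ℕ)) : Prop :=
  AlmostDisjointFam 𝒜 ∧ ∀ X : Set ℕ, X.Infinite → ∃ A ∈ 𝒜, (A ∩ X).Infinite

/-- `D` is a partitioner for the family `𝒜`. -/
def IsPartitioner (𝒜 : Set (Set ℕ)) (D : Set ℕ) : Prop :=
  ∀ A ∈ 𝒜, AlmostSubset A D ∨ (A ∩ D).Finite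

/-- The topology of the Ψ-space `Ψ(𝒜)` on the set `ℕ ⊕ ↥𝒜`: points of `ℕ` are isolated
and the sets `{A} ∪ (A \ F)`, `F` finite, form a neighbourhood base at `A ∈ 𝒜`. -/
def psiTop (𝒜 : Set (Set ℕ)) : TopologicalSpace (ℕ ⊕ ↥𝒜) where
  IsOpen U := ∀ A : ↥𝒜, Sum.inr A ∈ U → ((A : Set ℕ) \ {n | Sum.inl n ∈ U}).Finite
  isOpen_univ := by intro A _; simp
  isOpen_inter := by
    intro U V hU hV A hA
    apply ((hU A hA.1).union (hV A hA.2)).subset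
    rintro n ⟨hnA, hn⟩
    by_cases hU' : Sum.inl n ∈ U
    · exact Or.inr ⟨hnA, fun hV' => hn ⟨hU', hV'⟩⟩
    · exact Or.inl ⟨hnA, hU'⟩
  isOpen_sUnion := by
    intro S hS A hA
    obtain ⟨U, hU, hAU⟩ := Set.mem_sUnion.mp hA
    apply (hS U hU A hAU).subset
    rintro n ⟨hnA, hn⟩
    exact ⟨hnA, fun h => hn (Set.mem_sUnion.mpr ⟨U, hU, h⟩)⟩

/-- A set is regular closed if it is the closure of its interior. -/
def IsRegClosed {X : Type*} [TopologicalSpace X] (K : Set X) : Prop :=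
  closure (interior K) = K

/-- A set is π-closed if it is a finite intersection of regular closed sets. -/
def IsPiClosed {X : Type*} [TopologicalSpace X] (K : Set X) : Prop :=
  ∃ (n : ℕ) (f : Fin n → Set X), (∀ i, IsRegClosed (f i)) ∧ K = ⋂ i, f i

/-- A space is almost-normal if any two disjoint closed sets, one of which is regular
closed, can be separated by disjoint open sets. -/
def AlmostNormalSp (X : Type*) [TopologicalSpace X] : Prop :=
  ∀ C K : Set X, IsClosed C → IsClosed K → IsRegClosed K → Disjoint C K →
    ∃ U V : Set X, IsOpen U ∧ IsOpen V ∧ C ⊆ U ∧ K ⊆ V ∧ Disjoint U V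

/-- A space is partly-normal if any two disjoint closed sets, one regular closed and the
other π-closed, can be separated by disjoint open sets. -/
def PartlyNormalSp (X : Type*) [TopologicalSpace X] : Prop :=
  ∀ K₀ K₁ : Set X, IsRegClosed K₀ → IsPiClosed K₁ → Disjoint K₀ K₁ →
    ∃ U V : Set X, IsOpen U ∧ IsOpen V ∧ K₀ ⊆ U ∧ K₁ ⊆ V ∧ Disjoint U V

/-- A space is quasi-normal if any two disjoint π-closed sets can be separated by
disjoint open sets. -/
def QuasiNormalSp (X : Type*) [TopologicalSpace X] : Prop :=
  ∀ K₀ K₁ : Set X, IsPiClosed K₀ → IsPiClosed K₁ → Disjoint K₀ K₁ →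
    ∃ U V : Set X, IsOpen U ∧ IsOpen V ∧ K₀ ⊆ U ∧ K₁ ⊆ V ∧ Disjoint U V

/-- `D^0 = D` and `D^1 = ℕ \ D`. -/
def boolPart (D : Set ℕ) : Bool → Set ℕ
  | false => D
  | true => Dᶜ

/-- Two sets are equal modulo a finite set. -/
def EqModFin (X Y : Set ℕ) : Prop := ((X \ Y) ∪ (Y \ X)).Finite

/-- A nice family of partitioners for `𝒜`. -/
def NiceFamily (𝒜 𝒟 : Set (Set ℕ)) : Prop :=
  (∀ D ∈ 𝒟, IsPartitioner 𝒜 D) ∧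
  ∀ (n : ℕ) (Ds : Fin n → Set ℕ), (∀ i, Ds i ∈ 𝒟) → ∀ f : Fin n → Bool,
    {A | A ∈ 𝒜 ∧ AlmostSubset A (⋂ i, boolPart (Ds i) (f i))}.Finite →
    EqModFin (⋂ i, boolPart (Ds i) (f i))
      (⋃₀ {A | A ∈ 𝒜 ∧ AlmostSubset A (⋂ i, boolPart (Ds i) (f i))})

/-- `𝒜` is strongly ℵ₀-separated. -/
def StronglyAleph0Separated (𝒜 : Set (Set ℕ)) : Prop :=
  ∀ ℬ 𝒞 : Set (Set ℕ), ℬ ⊆ 𝒜 → 𝒞 ⊆ 𝒜 → ℬ.Countable → 𝒞.Countable → Disjoint ℬ 𝒞 →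
    ∃ D : Set ℕ, IsPartitioner 𝒜 D ∧ (∀ B ∈ ℬ, AlmostSubset B D) ∧
      ∀ C ∈ 𝒞, (C ∩ D).Finite

/-- `𝒜` is weakly separated. -/
def WeaklySeparated (𝒜 : Set (Set ℕ)) : Prop :=
  ∀ ℬ 𝒞 : Set (Set ℕ), ℬ ⊆ 𝒜 → 𝒞 ⊆ 𝒜 → Disjoint ℬ 𝒞 →
    ∃ D : Set ℕ, D.Infinite ∧ (∀ B ∈ ℬ, (D ∩ B).Infinite) ∧ ∀ C ∈ 𝒞, (D ∩ C).Finite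

namespace St12
open scoped Classical
open Cardinal

/-- the distinguished infinite set `W`: the even numbers -/
def Wev : Set ℕ := {n | Even n}

lemma Wev_infinite : Wev.Infinite := by
  apply Set.infinite_of_injective_forall_mem (f := fun k : ℕ => 2 * k)
  · intro a b h; simpa using h
  · intro k; exact ⟨k, two_mul k⟩

lemma Wev_compl_infinite : (Wevᶜ : Set ℕ).Infinite := by
  apply Set.infinite_of_injective_forall_mem (f := fun k : ℕ => 2 * k + 1)
  · intro a b h; simpa using h
  · intro k
    simp only [Wev, mem_compl_iff, mem_setOf_eq]
    intro ⟨m, hm⟩; omega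

/-- a set splits `W` if both its intersection with `W` and its part outside `W` are
infinite -/
def splits (X : Set ℕ) : Prop := (X ∩ Wev).Infinite ∧ (X \ Wev).Infinite

lemma splits_univ : splits univ := by
  constructor
  · rw [Set.univ_inter]; exact Wev_infinite
  · rw [← Set.compl_eq_univ_diff]; exact Wev_compl_infinite

/-- every-other element of a set -/
noncomputable def eo (X : Set ℕ) : Set ℕ := Set.range (fun k => Nat.nth (· ∈ X) (2 * k))

lemma eo_subset {X : Set ℕ} (hX : X.Infinite) : eo X ⊆ X := by
  rintro x ⟨k, rfl⟩
  exact Nat.nth_mem_of_infinite hX (2 * k)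

lemma eo_infinite {X : Set ℕ} (hX : X.Infinite) : (eo X).Infinite := by
  apply Set.infinite_range_of_injective
  intro a b h
  have := Nat.nth_injective hX h
  omega

lemma diff_eo_infinite {X : Set ℕ} (hX : X.Infinite) : (X \ eo X).Infinite := by
  apply Set.infinite_of_injective_forall_mem (f := fun k : ℕ => Nat.nth (· ∈ X) (2 * k + 1))
  · intro a b h
    have := Nat.nth_injective hX h
    omega
  · intro k
    refine ⟨Nat.nth_mem_of_infinite hX _, ?_⟩
    rintro ⟨j, hj⟩
    have := Nat.nth_injective hX hj
    omega

/-- the `C`-type set extracted at a stage with current tower set `E`, handling the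
candidate separator `D`: it has infinite intersection with `W`, and whenever possible it
also has infinite intersection with `D` (killing `D` as separator). -/
noncomputable def pickA (E D : Set ℕ) : Set ℕ :=
  if (E ∩ Wev ∩ D).Infinite then eo (E ∩ Wev ∩ D)
  else if (E ∩ D).Infinite then eo (E ∩ Wev) ∪ eo ((E ∩ D) \ Wev)
  else eo (E ∩ Wev)

/-- the `B`-type set extracted at a stage: an infinite subset of `E \ W` disjoint from
`pickA E D`. -/
noncomputable def pickB (E D : Set ℕ) : Set ℕ := eo ((E \ Wev) \ pickA E D)

/-- what remains of the tower set after a stage -/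
def post (E D : Set ℕ) : Set ℕ := E \ (pickA E D ∪ pickB E D)

section stage
variable {E D : Set ℕ}

lemma pickA_subset (hE : splits E) : pickA E D ⊆ E := by
  unfold pickA
  split_ifs with h1 h2
  · exact (eo_subset h1).trans (by intro x hx; exact hx.1.1)
  · apply Set.union_subset
    · exact (eo_subset hE.1).trans Set.inter_subset_left
    · have h3 : ((E ∩ D) \ Wev).Infinite := by
        have : E ∩ D = (E ∩ Wev ∩ D) ∪ ((E ∩ D) \ Wev) := by
          ext x; simp only [mem_inter_iff, mem_union, mem_diff]; tauto
        rcases Set.infinite_union.mp (this ▸ h2) with h | h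
        · exact absurd h h1
        · exact h
      exact (eo_subset h3).trans (fun x hx => hx.1.1)
  · exact (eo_subset hE.1).trans Set.inter_subset_left

lemma EDnW_inf (h1 : ¬(E ∩ Wev ∩ D).Infinite) (h2 : (E ∩ D).Infinite) :
    ((E ∩ D) \ Wev).Infinite := by
  have : E ∩ D = (E ∩ Wev ∩ D) ∪ ((E ∩ D) \ Wev) := by
    ext x; simp only [mem_inter_iff, mem_union, mem_diff]; tauto
  rcases Set.infinite_union.mp (this ▸ h2) with h | h
  · exact absurd h h1
  · exact h

lemma pickA_inter_W_infinite (hE : splits E) : (pickA E D ∩ Wev).Infinite := by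
  unfold pickA
  split_ifs with h1 h2
  · have hsub : eo (E ∩ Wev ∩ D) ⊆ eo (E ∩ Wev ∩ D) ∩ Wev := by
      intro x hx
      exact ⟨hx, ((eo_subset h1) hx).1.2⟩
    exact ((eo_infinite h1).mono hsub)
  · apply Set.Infinite.mono (s := eo (E ∩ Wev))
    · intro x hx
      exact ⟨Or.inl hx, ((eo_subset hE.1) hx).2⟩
    · exact eo_infinite hE.1
  · apply Set.Infinite.mono (s := eo (E ∩ Wev))
    · intro x hx; exact ⟨hx, ((eo_subset hE.1) hx).2⟩
    · exact eo_infinite hE.1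

lemma pickA_infinite (hE : splits E) : (pickA E D).Infinite :=
  (pickA_inter_W_infinite hE).mono Set.inter_subset_left

lemma pickA_kill (_hE : splits E) (h2 : (E ∩ D).Infinite) : (pickA E D ∩ D).Infinite := by
  unfold pickA
  split_ifs with h1
  · apply Set.Infinite.mono (s := eo (E ∩ Wev ∩ D))
    · intro x hx; exact ⟨hx, ((eo_subset h1) hx).2⟩
    · exact eo_infinite h1
  · have h3 := EDnW_inf h1 h2
    apply Set.Infinite.mono (s := eo ((E ∩ D) \ Wev))
    · intro x hx; exact ⟨Or.inr hx, ((eo_subset h3) hx).1.2⟩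
    · exact eo_infinite h3

lemma remA_W_infinite (hE : splits E) : ((E ∩ Wev) \ pickA E D).Infinite := by
  unfold pickA
  split_ifs with h1 h2
  · apply Set.Infinite.mono (s := (E ∩ Wev ∩ D) \ eo (E ∩ Wev ∩ D))
    · intro x hx; exact ⟨⟨hx.1.1.1, hx.1.1.2⟩, hx.2⟩
    · exact diff_eo_infinite h1
  · apply Set.Infinite.mono (s := (E ∩ Wev) \ eo (E ∩ Wev))
    · intro x hx
      refine ⟨hx.1, ?_⟩
      rintro (h | h)
      · exact hx.2 h
      · have := (eo_subset (EDnW_inf h1 h2)) h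
        exact this.2 hx.1.2
    · exact diff_eo_infinite hE.1
  · exact diff_eo_infinite hE.1

lemma remB_pre_infinite (hE : splits E) : ((E \ Wev) \ pickA E D).Infinite := by
  unfold pickA
  split_ifs with h1 h2
  · apply Set.Infinite.mono (s := E \ Wev)
    · intro x hx
      refine ⟨hx, fun h => ?_⟩
      exact hx.2 ((eo_subset h1) h).1.2
    · exact hE.2
  · have h3 := EDnW_inf h1 h2
    apply Set.Infinite.mono (s := ((E ∩ D) \ Wev) \ eo ((E ∩ D) \ Wev))
    · intro x hx
      refine ⟨⟨hx.1.1.1, hx.1.2⟩, ?_⟩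
      rintro (h | h)
      · exact hx.1.2 ((eo_subset hE.1) h).2
      · exact hx.2 h
    · exact diff_eo_infinite h3
  · apply Set.Infinite.mono (s := E \ Wev)
    · intro x hx
      refine ⟨hx, fun h => ?_⟩
      exact hx.2 ((eo_subset hE.1) h).2
    · exact hE.2

lemma pickB_subset (hE : splits E) : pickB E D ⊆ (E \ Wev) \ pickA E D :=
  eo_subset (remB_pre_infinite hE)

lemma pickB_infinite (hE : splits E) : (pickB E D).Infinite := eo_infinite (remB_pre_infinite hE)

lemma pickB_inter_W (hE : splits E) : pickB E D ∩ Wev = ∅ := by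
  ext x
  simp only [mem_inter_iff, mem_empty_iff_false, iff_false, not_and]
  intro hx
  exact fun hW => ((pickB_subset hE) hx).1.2 hW

lemma pickA_pickB_disjoint (hE : splits E) : pickA E D ∩ pickB E D = ∅ := by
  ext x
  simp only [mem_inter_iff, mem_empty_iff_false, iff_false, not_and]
  intro hx h
  exact ((pickB_subset hE) h).2 hx

lemma post_splits (hE : splits E) : splits (post E D) := by
  constructor
  · apply Set.Infinite.mono (s := (E ∩ Wev) \ pickA E D)
    · intro x hx
      refine ⟨⟨hx.1.1, ?_⟩, hx.1.2⟩
      rintro (h | h)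
      · exact hx.2 h
      · exact ((pickB_subset hE) h).1.2 hx.1.2
    · exact remA_W_infinite hE
  · apply Set.Infinite.mono (s := ((E \ Wev) \ pickA E D) \ eo ((E \ Wev) \ pickA E D))
    · intro x hx
      refine ⟨⟨hx.1.1.1, ?_⟩, hx.1.1.2⟩
      rintro (h | h)
      · exact hx.1.2 h
      · exact hx.2 h
    · exact diff_eo_infinite (remB_pre_infinite hE)

lemma post_subset : post E D ⊆ E := Set.diff_subset

lemma pickA_disj_post : pickA E D ∩ post E D = ∅ := by
  ext x
  simp only [mem_inter_iff, mem_empty_iff_false, iff_false, not_and]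
  intro hx h
  exact h.2 (Or.inl hx)

lemma pickB_disj_post : pickB E D ∩ post E D = ∅ := by
  ext x
  simp only [mem_inter_iff, mem_empty_iff_false, iff_false, not_and]
  intro hx h
  exact h.2 (Or.inr hx)

end stage

section pseudo

lemma exists_selector (H : ℕ → Set ℕ) (hH : ∀ n, (H n).Infinite) :
    ∃ x : ℕ → ℕ, StrictMono x ∧ ∀ n, x n ∈ H n := by
  let x : ℕ → ℕ := fun n => Nat.rec (sInf (H 0)) (fun n ih => sInf (H (n + 1) ∩ Set.Ioi ih)) n
  have hx0 : x 0 ∈ H 0 := Nat.sInf_mem (hH 0).nonempty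
  have hx : ∀ n, x (n + 1) ∈ H (n + 1) ∩ Set.Ioi (x n) := by
    intro n
    apply Nat.sInf_mem
    obtain ⟨b, hb, hb2⟩ := (hH (n + 1)).exists_gt (x n)
    exact ⟨b, hb, hb2⟩
  refine ⟨x, strictMono_nat_of_lt_succ (fun n => (hx n).2), ?_⟩
  intro n
  cases n with
  | zero => exact hx0
  | succ n => exact (hx n).1

lemma exists_pseudo {σ : Type*} [LinearOrder σ] (S : Set σ) (hS : S.Countable)
    (F : σ → Set ℕ) (hsp : ∀ j ∈ S, splits (F j))
    (hch : ∀ j ∈ S, ∀ j' ∈ S, j < j' → (F j' \ F j).Finite) :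
    ∃ E : Set ℕ, splits E ∧ ∀ j ∈ S, (E \ F j).Finite := by
  rcases S.eq_empty_or_nonempty with rfl | hne
  · exact ⟨univ, splits_univ, by simp⟩
  obtain ⟨u, hu⟩ := hS.exists_eq_range hne
  have huS : ∀ m, u m ∈ S := fun m => hu ▸ ⟨m, rfl⟩
  set G : ℕ → Set ℕ := fun n => ⋂ m ∈ Finset.range (n + 1), F (u m) with hGdef
  have hGsub : ∀ n m, m ≤ n → G n ⊆ F (u m) := by
    intro n m hm x hx
    simp only [hGdef, Set.mem_iInter] at hx
    exact hx m (Finset.mem_range.mpr (Nat.lt_succ_of_le hm))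
  have key : ∀ n, (G n ∩ Wev).Infinite ∧ ((G n) \ Wev).Infinite := by
    intro n
    have hne' : ((Finset.range (n + 1)).image u).Nonempty := by simp
    set M := ((Finset.range (n + 1)).image u).max' hne' with hMdef
    have hMS : M ∈ S := by
      have := ((Finset.range (n + 1)).image u).max'_mem hne'
      rw [← hMdef] at this
      obtain ⟨m, _, hm⟩ := Finset.mem_image.mp this
      exact hm ▸ huS m
    have hMax : ∀ m ∈ Finset.range (n + 1), u m ≤ M := by
      intro m hm
      exact Finset.le_max' _ _ (Finset.mem_image_of_mem u hm)
    have hfin : (F M \ G n).Finite := by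
      have hsub : F M \ G n ⊆ ⋃ m ∈ Finset.range (n + 1), (F M \ F (u m)) := by
        intro x hx
        simp only [hGdef, Set.mem_diff, Set.mem_iInter, not_forall] at hx
        obtain ⟨m, hm, hm2⟩ := hx.2
        exact Set.mem_biUnion hm ⟨hx.1, hm2⟩
      apply Set.Finite.subset _ hsub
      apply Set.Finite.biUnion (Finset.range (n + 1)).finite_toSet
      intro m hm
      rcases lt_or_eq_of_le (hMax m hm) with h | h
      · exact hch (u m) (huS m) M hMS h
      · rw [h]; simp
    constructor
    · apply Set.Infinite.mono (s := (F M ∩ Wev) \ (F M \ G n))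
      · intro x hx
        refine ⟨?_, hx.1.2⟩
        by_contra h
        exact hx.2 ⟨hx.1.1, h⟩
      · exact ((hsp M hMS).1).diff hfin
    · apply Set.Infinite.mono (s := (F M \ Wev) \ (F M \ G n))
      · intro x hx
        refine ⟨?_, hx.1.2⟩
        by_contra h
        exact hx.2 ⟨hx.1.1, h⟩
      · exact ((hsp M hMS).2).diff hfin
  set H : ℕ → Set ℕ := fun n => if Even n then G n ∩ Wev else G n \ Wev with hHdef
  have hH : ∀ n, (H n).Infinite := by
    intro n
    simp only [hHdef]
    split_ifs with h
    · exact (key n).1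
    · exact (key n).2
  have hHG : ∀ n, H n ⊆ G n := by
    intro n
    simp only [hHdef]
    split_ifs with h
    · exact Set.inter_subset_left
    · exact Set.diff_subset
  obtain ⟨x, hmono, hmem⟩ := exists_selector H hH
  refine ⟨Set.range x, ⟨?_, ?_⟩, ?_⟩
  · apply Set.infinite_of_injective_forall_mem (f := fun k : ℕ => x (2 * k))
    · intro a b h
      have := hmono.injective h
      omega
    · intro k
      refine ⟨⟨2 * k, rfl⟩, ?_⟩
      have := hmem (2 * k)
      have heven : Even (2 * k) := ⟨k, two_mul k⟩
      simp only [hHdef, if_pos heven] at this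
      exact this.2
  · apply Set.infinite_of_injective_forall_mem (f := fun k : ℕ => x (2 * k + 1))
    · intro a b h
      have := hmono.injective h
      omega
    · intro k
      have := hmem (2 * k + 1)
      have hodd : ¬ Even (2 * k + 1) := by
        intro ⟨m, hm⟩; omega
      simp only [hHdef, if_neg hodd] at this
      exact ⟨⟨2 * k + 1, rfl⟩, this.2⟩
  · intro j hj
    rw [hu] at hj
    obtain ⟨m₀, rfl⟩ := hj
    apply Set.Finite.subset ((Set.finite_Iio (m₀ + 1)).image x)
    rintro y ⟨⟨n, rfl⟩, hy⟩
    refine Set.mem_image_of_mem x ?_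
    simp only [Set.mem_Iio]
    by_contra h
    push_neg at h
    exact hy (hGsub n m₀ (by omega) (hHG n (hmem n)))

end pseudo

section tower

/-- the index type: a well-order of order type `ω₁` -/
abbrev σO : Type := (Cardinal.aleph 1).ord.ToType

lemma Iio_countable (i : σO) : (Set.Iio i).Countable := by
  rw [Cardinal.countable_iff_lt_aleph_one]
  exact Cardinal.mk_Iio_ord_toType i

lemma mk_σO : #σO = Cardinal.aleph 1 := by
  rw [Cardinal.mk_toType, Cardinal.card_ord]

lemma countable_bounded {S : Set σO} (hS : S.Countable) : ∃ δ : σO, ∀ s ∈ S, s < δ := by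
  by_contra h
  push_neg at h
  have hcov : (Set.univ : Set σO) ⊆ ⋃ s ∈ S, Set.Iic s := by
    intro δ _
    obtain ⟨s, hs, hle⟩ := h δ
    exact Set.mem_biUnion hs hle
  have hc : (Set.univ : Set σO).Countable := by
    apply Set.Countable.mono hcov
    apply hS.biUnion
    intro s _
    have hIic : Set.Iic s = Set.Iio s ∪ {s} := by
      ext y; simp [le_iff_lt_or_eq]
    rw [hIic]
    exact (Iio_countable s).union (Set.countable_singleton s)
  have hcnt : Countable σO := Set.countable_univ_iff.mp hc
  have h1 : #σO ≤ Cardinal.aleph0 := Cardinal.mk_le_aleph0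
  rw [mk_σO] at h1
  exact absurd h1 (not_le.mpr Cardinal.aleph0_lt_aleph_one)

variable (k : σO → Set ℕ)

/-- the tower: at each stage, a pseudo-intersection of what remains of all earlier
stages -/
noncomputable def Etow : σO → Set ℕ :=
  (IsWellFounded.wf (α := σO) (r := (· < ·))).fix
    (fun i ih =>
      if h : ∃ X : Set ℕ, splits X ∧ ∀ j, ∀ hj : j < i, (X \ post (ih j hj) (k j)).Finite
      then h.choose else ∅)

lemma Etow_eq (i : σO) :
    Etow k i = if h : ∃ X : Set ℕ, splits X ∧
        ∀ j, ∀ _ : j < i, (X \ post (Etow k j) (k j)).Finite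
      then h.choose else ∅ := by
  unfold Etow
  exact WellFounded.fix_eq _ _ i

lemma Etow_spec : ∀ i : σO, splits (Etow k i) ∧
    ∀ j, j < i → (Etow k i \ post (Etow k j) (k j)).Finite := by
  intro i
  refine (IsWellFounded.wf (α := σO) (r := (· < ·))).induction
    (C := fun i => splits (Etow k i) ∧
      ∀ j, j < i → (Etow k i \ post (Etow k j) (k j)).Finite) i ?_
  intro i ih
  have hex : ∃ X : Set ℕ, splits X ∧
      ∀ j, ∀ _ : j < i, (X \ post (Etow k j) (k j)).Finite := by
    obtain ⟨E0, hsp, hfin⟩ := exists_pseudo (Set.Iio i) (Iio_countable i)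
      (fun j => post (Etow k j) (k j))
      (fun j hj => post_splits (ih j hj).1)
      (fun j hj j' hj' hlt => Set.Finite.subset ((ih j' hj').2 j hlt)
        (fun x hx => ⟨post_subset hx.1, hx.2⟩))
    exact ⟨E0, hsp, fun j hj => hfin j hj⟩
  rw [Etow_eq, dif_pos hex]
  exact ⟨hex.choose_spec.1, fun j hj => hex.choose_spec.2 j hj⟩

lemma Etow_splits (i : σO) : splits (Etow k i) := (Etow_spec k i).1

/-- the stage-`i` member with infinite intersection with `W` -/
noncomputable def setA (i : σO) : Set ℕ := pickA (Etow k i) (k i)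

/-- the stage-`i` member disjoint from `W` -/
noncomputable def setB (i : σO) : Set ℕ := pickB (Etow k i) (k i)

/-- the almost disjoint family -/
def Fam : Set (Set ℕ) := {S | ∃ i, S = setA k i ∨ S = setB k i}

lemma stage_subset {i : σO} {X : Set ℕ} (hX : X = setA k i ∨ X = setB k i) :
    X ⊆ Etow k i := by
  rcases hX with rfl | rfl
  · exact pickA_subset (Etow_splits k i)
  · exact (pickB_subset (Etow_splits k i)).trans (fun x hx => hx.1.1)

lemma stage_disj_post {i : σO} {X : Set ℕ} (hX : X = setA k i ∨ X = setB k i) :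
    ∀ x ∈ X, x ∉ post (Etow k i) (k i) := by
  intro x hx hp
  rcases hX with rfl | rfl
  · exact hp.2 (Or.inl hx)
  · exact hp.2 (Or.inr hx)

lemma cross_finite {i j : σO} (hij : j < i) {X Y : Set ℕ}
    (hX : X = setA k i ∨ X = setB k i) (hY : Y = setA k j ∨ Y = setB k j) :
    (X ∩ Y).Finite := by
  apply Set.Finite.subset ((Etow_spec k i).2 j hij)
  intro x hx
  exact ⟨stage_subset k hX hx.1, fun hp => stage_disj_post k hY x hx.2 hp⟩

lemma setA_infinite (i : σO) : (setA k i).Infinite := pickA_infinite (Etow_splits k i)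

lemma setB_infinite (i : σO) : (setB k i).Infinite := pickB_infinite (Etow_splits k i)

lemma setA_W_infinite (i : σO) : (setA k i ∩ Wev).Infinite :=
  pickA_inter_W_infinite (Etow_splits k i)

lemma setB_W_empty (i : σO) : setB k i ∩ Wev = ∅ := pickB_inter_W (Etow_splits k i)

lemma setA_setB_disjoint (i : σO) : setA k i ∩ setB k i = ∅ :=
  pickA_pickB_disjoint (Etow_splits k i)

lemma earlier_inter_Etow_finite {i δ : σO} (hiδ : i < δ) {X : Set ℕ}
    (hX : X = setA k i ∨ X = setB k i) : (X ∩ Etow k δ).Finite := by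
  apply Set.Finite.subset ((Etow_spec k δ).2 i hiδ)
  intro x hx
  exact ⟨hx.2, fun hp => stage_disj_post k hX x hx.1 hp⟩

lemma tail_diff_Etow_finite {i δ : σO} (hδi : δ ≤ i) {X : Set ℕ}
    (hX : X = setA k i ∨ X = setB k i) : (X \ Etow k δ).Finite := by
  rcases lt_or_eq_of_le hδi with h | rfl
  · apply Set.Finite.subset ((Etow_spec k i).2 δ h)
    intro x hx
    refine ⟨stage_subset k hX hx.1, fun hp => hx.2 (post_subset hp)⟩
  · apply Set.Finite.subset (Set.finite_empty)
    intro x hx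
    exact absurd (stage_subset k hX hx.1) hx.2

end tower

lemma enum_aux {s : Set (Set ℕ)} (hs : s.Countable) :
    ∃ f : ℕ → Set ℕ, s ⊆ Set.range f ∧ ∀ n, f n ∈ s ∨ f n = ∅ := by
  rcases s.eq_empty_or_nonempty with rfl | hne
  · exact ⟨fun _ => ∅, by simp, fun _ => Or.inr rfl⟩
  · obtain ⟨f, hf⟩ := hs.exists_eq_range hne
    refine ⟨f, hf.le, fun n => Or.inl (hf ▸ Set.mem_range_self n)⟩

lemma σO_nonempty : Nonempty σO := by
  rw [Ordinal.toType_nonempty_iff_ne_zero]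
  intro h0
  have h1 : Cardinal.aleph 1 = 0 := by
    rw [← Cardinal.card_ord (Cardinal.aleph 1), h0, Ordinal.card_zero]
  have h2 : (0 : Cardinal) < Cardinal.aleph 1 :=
    lt_of_le_of_lt zero_le Cardinal.aleph0_lt_aleph_one
  rw [h1] at h2
  exact lt_irrefl _ h2

lemma Fam_AD (k : σO → Set ℕ) : AlmostDisjointFam (Fam k) := by
  constructor
  · rintro A ⟨i, hA⟩
    rcases hA with rfl | rfl
    exacts [setA_infinite k i, setB_infinite k i]
  · rintro A ⟨i, hA⟩ B ⟨j, hB⟩ hne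
    rcases lt_trichotomy i j with h | rfl | h
    · rw [Set.inter_comm]
      exact cross_finite k h hB hA
    · rcases hA with rfl | rfl <;> rcases hB with rfl | rfl
      · exact absurd rfl hne
      · rw [setA_setB_disjoint k i]; exact Set.finite_empty
      · rw [Set.inter_comm, setA_setB_disjoint k i]; exact Set.finite_empty
      · exact absurd rfl hne
    · exact cross_finite k h hA hB

lemma Fam_strong_sep (k : σO → Set ℕ) : StronglyAleph0Separated (Fam k) := by
  have hAD := (Fam_AD k).2
  intro ℬ 𝒞 hB hC hcB hcC hdisj
  have hne : Nonempty σO := σO_nonempty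
  -- choose indices for members of ℬ ∪ 𝒞
  have hidx : ∀ X : Set ℕ, ∃ i : σO, X ∈ ℬ ∪ 𝒞 → (X = setA k i ∨ X = setB k i) := by
    intro X
    by_cases hX : X ∈ ℬ ∪ 𝒞
    · have hXF : X ∈ Fam k := by
        rcases hX with h | h
        exacts [hB h, hC h]
      obtain ⟨i, hi⟩ := hXF
      exact ⟨i, fun _ => hi⟩
    · exact ⟨Classical.arbitrary σO, fun h => absurd h hX⟩
  choose ix hix using hidx
  obtain ⟨δ, hδ⟩ := countable_bounded ((hcB.union hcC).image ix)
  -- enumerate ℬ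
  obtain ⟨f, hfB, hfmem⟩ := enum_aux hcB
  -- the countable set of all other members indexed below δ, together with 𝒞
  set 𝒢 : Set (Set ℕ) := {X | ∃ j, j < δ ∧ (X = setA k j ∨ X = setB k j)} \ ℬ with h𝒢
  have hc𝒢 : 𝒢.Countable := by
    apply Set.Countable.mono (s₁ := 𝒢)
      (s₂ := (setA k '' Set.Iio δ) ∪ (setB k '' Set.Iio δ))
    · rintro X ⟨⟨j, hj, hX⟩, -⟩
      rcases hX with rfl | rfl
      · exact Or.inl ⟨j, hj, rfl⟩
      · exact Or.inr ⟨j, hj, rfl⟩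
    · exact ((Iio_countable δ).image _).union ((Iio_countable δ).image _)
  obtain ⟨g, hgG, hgmem⟩ := enum_aux hc𝒢
  have h𝒢Fam : ∀ X ∈ 𝒢, X ∈ Fam k := by
    rintro X ⟨⟨j, _, hX⟩, -⟩
    exact ⟨j, hX⟩
  have hC𝒢 : 𝒞 ⊆ 𝒢 := by
    intro C hC'
    have hCix : C = setA k (ix C) ∨ C = setB k (ix C) := hix C (Or.inr hC')
    have hCδ : ix C < δ := hδ _ (Set.mem_image_of_mem ix (Or.inr hC'))
    exact ⟨⟨ix C, hCδ, hCix⟩, fun hCB => (Set.disjoint_left.mp hdisj hCB) hC'⟩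
  -- the partitioner
  set D : Set ℕ := ⋃ n, (f n \ (Etow k δ ∪ ⋃ m ∈ Finset.range (n + 1), g m)) with hD
  have hDE : ∀ x ∈ D, x ∉ Etow k δ := by
    intro x hx
    obtain ⟨n, hn⟩ := Set.mem_iUnion.mp hx
    exact fun hE => hn.2 (Or.inl hE)
  -- members of ℬ are almost inside D
  have hBin : ∀ X ∈ ℬ, AlmostSubset X D := by
    intro X hX
    obtain ⟨n₀, hn₀⟩ := hfB hX
    have hXidx : X = setA k (ix X) ∨ X = setB k (ix X) := hix X (Or.inl hX)
    have hXδ : ix X < δ := hδ _ (Set.mem_image_of_mem ix (Or.inl hX))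
    have hfin1 : (X ∩ Etow k δ).Finite := earlier_inter_Etow_finite k hXδ hXidx
    have hfin2 : ∀ m, (X ∩ g m).Finite := by
      intro m
      rcases hgmem m with hg | hg
      · refine hAD X (hB hX) (g m) (h𝒢Fam _ hg) ?_
        intro hXg
        exact hg.2 (hXg ▸ hX)
      · rw [hg]; simp
    have hsub : X \ D ⊆ (X ∩ Etow k δ) ∪ ⋃ m ∈ Finset.range (n₀ + 1), (X ∩ g m) := by
      intro x hx
      have hxX : x ∈ X := hx.1
      have : x ∉ f n₀ \ (Etow k δ ∪ ⋃ m ∈ Finset.range (n₀ + 1), g m) := by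
        intro hmem
        exact hx.2 (Set.mem_iUnion.mpr ⟨n₀, hmem⟩)
      rw [← hn₀] at hxX
      rcases not_and_or.mp (by rw [Set.mem_diff] at this; exact this) with h | h
      · exact absurd hxX h
      · rw [not_not] at h
        rcases h with h | h
        · exact Or.inl ⟨hn₀ ▸ hxX, h⟩
        · obtain ⟨m, hm1, hm2⟩ := Set.mem_iUnion₂.mp h
          exact Or.inr (Set.mem_biUnion hm1 ⟨hn₀ ▸ hxX, hm2⟩)
    apply Set.Finite.subset _ hsub
    apply hfin1.union
    apply Set.Finite.biUnion (Finset.range (n₀ + 1)).finite_toSet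
    intro m _
    exact hfin2 m
  -- members of 𝒢 meet D finitely
  have h𝒢out : ∀ C ∈ 𝒢, (C ∩ D).Finite := by
    intro C hC'
    obtain ⟨m₀, hm₀⟩ := hgG hC'
    have hsub : C ∩ D ⊆ ⋃ n ∈ Finset.range m₀, (C ∩ f n) := by
      intro x hx
      obtain ⟨n, hn⟩ := Set.mem_iUnion.mp hx.2
      have hnm : n < m₀ := by
        by_contra hge
        push_neg at hge
        apply hn.2
        right
        have hmem : m₀ ∈ Finset.range (n + 1) := Finset.mem_range.mpr (by omega)
        have hxg : x ∈ g m₀ := by rw [hm₀]; exact hx.1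
        exact Set.mem_biUnion hmem hxg
      exact Set.mem_biUnion (Finset.mem_range.mpr hnm) ⟨hx.1, hn.1⟩
    apply Set.Finite.subset _ hsub
    apply Set.Finite.biUnion (Finset.range m₀).finite_toSet
    intro n _
    rcases hfmem n with hf' | hf'
    · refine hAD C (h𝒢Fam _ hC') (f n) (hB hf') ?_
      intro hCf
      exact hC'.2 (hCf ▸ hf')
    · rw [hf']; simp
  refine ⟨D, ?_, hBin, fun C hC' => h𝒢out C (hC𝒢 hC')⟩
  -- partitioner
  intro A hA
  by_cases hAB : A ∈ ℬ
  · exact Or.inl (hBin A hAB)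
  · obtain ⟨i, hrep⟩ := hA
    by_cases hi : i < δ
    · exact Or.inr (h𝒢out A ⟨⟨i, hi, hrep⟩, hAB⟩)
    · right
      have hsub : A ∩ D ⊆ A \ Etow k δ := by
        intro x hx
        exact ⟨hx.1, hDE x hx.2⟩
      exact Set.Finite.subset (tail_diff_Etow_finite k (not_lt.mp hi) hrep) hsub

lemma Fam_kill (k : σO → Set ℕ) (hk : Function.Surjective k) (W : Set ℕ) (hW : W = Wev) :
    ¬ ∃ D : Set ℕ, (∀ A ∈ Fam k, (A ∩ W).Finite → AlmostSubset A D) ∧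
      ∀ A ∈ Fam k, (A ∩ W).Infinite → (A ∩ D).Finite := by
  subst hW
  rintro ⟨D, h1, h2⟩
  obtain ⟨i, hki⟩ := hk D
  by_cases hD : (Etow k i ∩ D).Infinite
  · have hmem : setA k i ∈ Fam k := ⟨i, Or.inl rfl⟩
    have hfin := h2 _ hmem (setA_W_infinite k i)
    have hkill : (pickA (Etow k i) (k i) ∩ k i).Infinite :=
      pickA_kill (Etow_splits k i) (by rw [hki]; exact hD)
    apply hkill
    show (setA k i ∩ k i).Finite
    have h' : setA k i ∩ k i = setA k i ∩ D := by rw [hki]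
    rw [h']
    exact hfin
  · have hmem : setB k i ∈ Fam k := ⟨i, Or.inr rfl⟩
    have hWfin : (setB k i ∩ Wev).Finite := by
      rw [setB_W_empty]
      exact Set.finite_empty
    have hsub := h1 _ hmem hWfin
    have hfin : (setB k i ∩ D).Finite := by
      apply Set.Finite.subset (Set.not_infinite.mp hD)
      intro x hx
      exact ⟨stage_subset k (Or.inr rfl) hx.1, hx.2⟩
    have hBfin : (setB k i).Finite := by
      apply Set.Finite.subset (hsub.union hfin)
      intro x hx
      by_cases h : x ∈ D
      · exact Or.inr ⟨hx, h⟩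
      · exact Or.inl ⟨hx, h⟩
    exact setB_infinite k i hBfin

end St12


/-- Under CH there are a strongly ℵ₀-separated AD family `𝒜` and an
infinite `W ⊆ ω` such that, with `𝒞 = {A ∈ 𝒜 : A ∩ W infinite}`, no `D ⊆ ω` almost
contains every member of `𝒜 \ 𝒞` while being almost disjoint from every member of `𝒞`. -/
theorem statement12 (hCH : (2 : Cardinal) ^ Cardinal.aleph0 = Cardinal.aleph 1) :
    ∃ (𝒜 : Set (Set ℕ)) (W : Set ℕ), AlmostDisjointFam 𝒜 ∧ W.Infinite ∧
      StronglyAleph0Separated 𝒜 ∧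
      ¬ ∃ D : Set ℕ, (∀ A ∈ 𝒜, (A ∩ W).Finite → AlmostSubset A D) ∧
        ∀ A ∈ 𝒜, (A ∩ W).Infinite → (A ∩ D).Finite := by
  have hmk : (Cardinal.mk (Set ℕ)) = Cardinal.aleph 1 := by
    rw [Cardinal.mk_set, Cardinal.mk_nat]
    have h2 : Cardinal.lift ((2 : Cardinal.{0}) ^ Cardinal.aleph0) =
        Cardinal.lift (Cardinal.aleph 1 : Cardinal.{0}) := by
      rw [Cardinal.lift_power, Cardinal.lift_aleph0, Cardinal.lift_two, Cardinal.lift_aleph]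
      simpa using hCH
    exact Cardinal.lift_injective h2
  obtain ⟨e⟩ : Nonempty (St12.σO ≃ Set ℕ) := Cardinal.eq.1 (St12.mk_σO.trans hmk.symm)
  exact ⟨St12.Fam e, St12.Wev, St12.Fam_AD e, St12.Wev_infinite, St12.Fam_strong_sep e,
    St12.Fam_kill e e.surjective St12.Wev rfl⟩
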